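/- For a Steiner system S(1,2,2v) D on [2v], let f_D(n) be the number of designs D' in the orbit of D under Sym([2v]) (equivalently, the number of perfect matchings of [2v]) such that |Q*(D')| = n, where Q*(D') = B' ∪ ⋃_{B∈B'} N⁻(B) in Welter's game Γ_{2v,2}. Then Σ_n f_D(n) x^n = x^{v²} · Π_{i=1}^{v} (x^{2i−1} − 1)/(x − 1) as polynomials in x. -/

import Mathlib

/-- The edge relation of Welter's game: there is an edge from `P` to `P^{(p q)}`
whenever `p ∈ P`, `q ∉ P`, `q < p`. -/
def welterEdge (P Q : Finset ℕ) : Prop :=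
  ∃ p ∈ P, ∃ q, q ∉ P ∧ q < p ∧ Q = insert q (P.erase p)

/-- The vertex set of Welter's game `Γ_{v,k}`: the `k`-element subsets of `{0, ..., v-1}`. -/
def welterVertex (v k : ℕ) : Set (Finset ℕ) :=
  {P | P ⊆ Finset.range v ∧ P.card = k}

/-- The edge relation of Welter's game `Γ_{v,k}`. -/
def welterRel (v k : ℕ) : Finset ℕ → Finset ℕ → Prop :=
  fun P Q => P ∈ welterVertex v k ∧ Q ∈ welterVertex v k ∧ welterEdge P Q

/-- A `t`-`(v, k, lam)` design with point set `{0, ..., v-1}` and block set `𝔅`: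
every block is a `k`-subset of `{0, ..., v-1}` and every `t`-subset of `{0, ..., v-1}`
is contained in exactly `lam` blocks. -/
def IsDesign (v t k lam : ℕ) (𝔅 : Finset (Finset ℕ)) : Prop :=
  (∀ b ∈ 𝔅, b ⊆ Finset.range v ∧ b.card = k) ∧
  ∀ T : Finset ℕ, T ⊆ Finset.range v → T.card = t →
    (𝔅.filter fun b => T ⊆ b).card = lam

/-- A Steiner system `S(t, k, v)` with point set `{0, ..., v-1}`. -/
def IsSteiner (v t k : ℕ) (𝔅 : Finset (Finset ℕ)) : Prop :=
  IsDesign v t k 1 𝔅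

/-- `Q*(D) = 𝔅 ∪ ⋃_{B ∈ 𝔅} N⁻(B)` in Welter's game `Γ_{v,k}`. -/
def qstarW (v k : ℕ) (𝔅 : Finset (Finset ℕ)) : Set (Finset ℕ) :=
  (↑𝔅 : Set (Finset ℕ)) ∪ {P | ∃ b ∈ 𝔅, welterRel v k P b}

open Finset
open scoped Classical

namespace Stmt19Aux

def upF (a : ℕ) (y : ℕ) : ℕ := if y + 1 < a then y + 1 else y + 2
def downF (a : ℕ) (x : ℕ) : ℕ := if x < a then x - 1 else x - 2

lemma upF_strictMono (a : ℕ) : StrictMono (upF a) := by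
  intro y z h; unfold upF; split_ifs <;> omega

lemma downF_upF (a y : ℕ) : downF a (upF a y) = y := by
  unfold upF downF; split_ifs <;> omega

lemma upF_pos (a y : ℕ) : 0 < upF a y := by unfold upF; split_ifs <;> omega

lemma upF_ne (a y : ℕ) (ha : 1 ≤ a) : upF a y ≠ a := by unfold upF; split_ifs <;> omega

lemma upF_lt (a y n : ℕ) (h : y < n) : upF a y < n + 2 := by unfold upF; split_ifs <;> omega

lemma upF_downF (a x : ℕ) (ha : 1 ≤ a) (hx0 : x ≠ 0) (hxa : x ≠ a) :
    upF a (downF a x) = x := by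
  unfold downF; split_ifs with h <;> (unfold upF; split_ifs <;> omega)

lemma downF_lt (a x n : ℕ) (ha1 : 1 ≤ a) (hx : x < n + 2) (hx0 : x ≠ 0) (hxa : x ≠ a)
    (ha : a ≤ n + 1) : downF a x < n := by unfold downF; split_ifs <;> omega

lemma downF_lt_downF (a x y : ℕ) (ha : 1 ≤ a) (hx0 : x ≠ 0) (hxa : x ≠ a) (hy0 : y ≠ 0)
    (hya : y ≠ a) (h : x < y) : downF a x < downF a y := by
  unfold downF; split_ifs <;> omega

lemma mem_qstar_iff {n : ℕ} {M : Finset (Finset ℕ)}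
    (hM : ∀ b ∈ M, b ⊆ Finset.range n ∧ b.card = 2) (P : Finset ℕ) :
    P ∈ qstarW n 2 M ↔ P ⊆ Finset.range n ∧ P.card = 2 ∧
      (P ∈ M ∨ ∃ x p q : ℕ, P = {x, p} ∧ q < p ∧ {x, q} ∈ M) := by
  constructor
  · intro h
    rcases h with h | h
    · have hPM : P ∈ M := h
      exact ⟨(hM P hPM).1, (hM P hPM).2, Or.inl hPM⟩
    · obtain ⟨b, hbM, hPv, hbv, p, hp, q, hq, hqp, hbq⟩ := h
      obtain ⟨hPr, hPc⟩ := hPv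
      have hec : (P.erase p).card = 1 := by
        rw [card_erase_of_mem hp, hPc]
      obtain ⟨x, hx⟩ := Finset.card_eq_one.mp hec
      have hxp : x ≠ p := by
        have : x ∈ P.erase p := hx ▸ Finset.mem_singleton_self x
        exact Finset.ne_of_mem_erase this
      have hP : P = {x, p} := by
        rw [Finset.pair_comm]
        rw [← Finset.insert_erase hp, hx]
      refine ⟨hPr, hPc, Or.inr ⟨x, p, q, hP, hqp, ?_⟩⟩
      have : b = {x, q} := by rw [hbq, hx, Finset.pair_comm]
      rw [← this]; exact hbM
  · rintro ⟨hPr, hPc, hcase⟩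
    rcases hcase with hPM | ⟨x, p, q, hP, hqp, hxqM⟩
    · exact Or.inl hPM
    · refine Or.inr ⟨{x, q}, hxqM, ⟨hPr, hPc⟩, ⟨(hM _ hxqM).1, (hM _ hxqM).2⟩, p, ?_, q, ?_, hqp, ?_⟩
      · rw [hP]; simp
      · have hxq : x ≠ q := by
          intro h; subst h
          have := (hM _ hxqM).2
          simp at this
        have hxp : x ≠ p := by
          intro h; subst h; rw [hP] at hPc; simp at hPc
        rw [hP]; simp only [Finset.mem_insert, Finset.mem_singleton]
        push_neg
        exact ⟨fun h => hxq h.symm, fun h => absurd h (Nat.ne_of_lt hqp)⟩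
      · have hxp : x ≠ p := by
          intro h; subst h; rw [hP] at hPc; simp at hPc
        rw [hP, Finset.pair_comm x p, Finset.erase_insert (by simpa using hxp.symm)]
        rw [Finset.pair_comm]

noncomputable def qFin (n : ℕ) (M : Finset (Finset ℕ)) : Finset (Finset ℕ) :=
  ((Finset.range n).powersetCard 2).filter
    (fun P => P ∈ M ∨ ∃ x p q : ℕ, P = {x, p} ∧ q < p ∧ {x, q} ∈ M)

lemma mem_qFin_iff {n : ℕ} {M : Finset (Finset ℕ)} (P : Finset ℕ) :
    P ∈ qFin n M ↔ P ⊆ Finset.range n ∧ P.card = 2 ∧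
      (P ∈ M ∨ ∃ x p q : ℕ, P = {x, p} ∧ q < p ∧ {x, q} ∈ M) := by
  simp [qFin, Finset.mem_powersetCard, and_assoc]

lemma ncard_qstar {n : ℕ} {M : Finset (Finset ℕ)}
    (hM : ∀ b ∈ M, b ⊆ Finset.range n ∧ b.card = 2) :
    (qstarW n 2 M).ncard = (qFin n M).card := by
  have h : qstarW n 2 M = ↑(qFin n M) := by
    ext P
    rw [Finset.mem_coe, mem_qFin_iff, mem_qstar_iff hM]
  rw [h, Set.ncard_coe_finset]

lemma steiner_unique {n : ℕ} {M : Finset (Finset ℕ)} (h : IsSteiner n 1 2 M) {x : ℕ}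
    (hx : x < n) : ∃! b, b ∈ M ∧ x ∈ b := by
  have h2 := h.2 {x} (by simp [hx]) (by simp)
  rw [Finset.card_eq_one] at h2
  obtain ⟨b, hb⟩ := h2
  have hbmem : b ∈ M.filter (fun b => {x} ⊆ b) := hb ▸ Finset.mem_singleton_self b
  rw [Finset.mem_filter, Finset.singleton_subset_iff] at hbmem
  refine ⟨b, hbmem, ?_⟩
  intro c hc
  have : c ∈ M.filter (fun b => {x} ⊆ b) :=
    Finset.mem_filter.2 ⟨hc.1, Finset.singleton_subset_iff.2 hc.2⟩
  rw [hb, Finset.mem_singleton] at this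
  exact this

lemma steiner_of {n : ℕ} {M : Finset (Finset ℕ)}
    (hb : ∀ b ∈ M, b ⊆ Finset.range n ∧ b.card = 2)
    (hu : ∀ x < n, ∃! b, b ∈ M ∧ x ∈ b) : IsSteiner n 1 2 M := by
  refine ⟨hb, ?_⟩
  intro T hT hT1
  rw [Finset.card_eq_one] at hT1
  obtain ⟨x, rfl⟩ := hT1
  have hx : x < n := by
    have := hT (Finset.mem_singleton_self x)
    simpa using this
  obtain ⟨b, ⟨hbM, hxb⟩, hun⟩ := hu x hx
  rw [Finset.card_eq_one]
  refine ⟨b, ?_⟩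
  ext c
  simp only [Finset.mem_filter, Finset.mem_singleton, Finset.singleton_subset_iff]
  constructor
  · rintro ⟨h1, h2⟩; exact hun c ⟨h1, h2⟩
  · rintro rfl; exact ⟨hbM, hxb⟩

end Stmt19Aux

namespace Stmt19Aux

noncomputable def liftM (a : ℕ) (M' : Finset (Finset ℕ)) : Finset (Finset ℕ) :=
  insert ({0, a} : Finset ℕ) (M'.image (fun b => b.image (upF a)))

variable {u a : ℕ} {M' : Finset (Finset ℕ)}

lemma up_block_avoid (ha1 : 1 ≤ a) {b : Finset ℕ} (hb : b ∈ M'.image (fun b => b.image (upF a))) :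
    0 ∉ b ∧ a ∉ b := by
  obtain ⟨b0, _, rfl⟩ := Finset.mem_image.mp hb
  constructor
  · intro h
    obtain ⟨y, _, hy⟩ := Finset.mem_image.mp h
    exact absurd hy.symm (Nat.ne_of_lt (upF_pos a y))
  · intro h
    obtain ⟨y, _, hy⟩ := Finset.mem_image.mp h
    exact upF_ne a y ha1 hy

lemma mem_liftM_iff {b : Finset ℕ} :
    b ∈ liftM a M' ↔ b = {0, a} ∨ ∃ b0 ∈ M', b = b0.image (upF a) := by
  simp [liftM, eq_comm]

lemma lift_blocks (ha1 : 1 ≤ a) (ha2 : a ≤ 2 * u + 1)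
    (hM' : ∀ b ∈ M', b ⊆ Finset.range (2 * u) ∧ b.card = 2) :
    ∀ b ∈ liftM a M', b ⊆ Finset.range (2 * u + 2) ∧ b.card = 2 := by
  intro b hb
  rcases mem_liftM_iff.mp hb with rfl | ⟨b0, hb0, rfl⟩
  · constructor
    · intro x hx
      simp only [Finset.mem_insert, Finset.mem_singleton] at hx
      rcases hx with rfl | rfl <;> (rw [Finset.mem_range]; omega)
    · rw [Finset.card_insert_of_notMem (by simp; omega), Finset.card_singleton]
  · constructor
    · intro x hx
      obtain ⟨y, hy, rfl⟩ := Finset.mem_image.mp hx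
      have := Finset.mem_range.mp ((hM' b0 hb0).1 hy)
      exact Finset.mem_range.mpr (upF_lt a y (2 * u) this)
    · rw [Finset.card_image_of_injective _ (upF_strictMono a).injective]
      exact (hM' b0 hb0).2

lemma lift_unique (ha1 : 1 ≤ a) (ha2 : a ≤ 2 * u + 1) (hM' : IsSteiner (2 * u) 1 2 M') :
    ∀ x < 2 * u + 2, ∃! b, b ∈ liftM a M' ∧ x ∈ b := by
  intro x hx
  by_cases hx0 : x = 0
  · subst hx0
    refine ⟨{0, a}, ⟨mem_liftM_iff.mpr (Or.inl rfl), by simp⟩, ?_⟩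
    rintro c ⟨hc, h0c⟩
    rcases mem_liftM_iff.mp hc with rfl | ⟨b0, hb0, rfl⟩
    · rfl
    · exact absurd h0c (up_block_avoid ha1 (Finset.mem_image.mpr ⟨b0, hb0, rfl⟩)).1
  by_cases hxa : x = a
  · subst hxa
    refine ⟨{0, x}, ⟨mem_liftM_iff.mpr (Or.inl rfl), by simp⟩, ?_⟩
    rintro c ⟨hc, h0c⟩
    rcases mem_liftM_iff.mp hc with rfl | ⟨b0, hb0, rfl⟩
    · rfl
    · exact absurd h0c (up_block_avoid ha1 (Finset.mem_image.mpr ⟨b0, hb0, rfl⟩)).2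
  · have hdx : downF a x < 2 * u := downF_lt a x (2 * u) ha1 hx hx0 hxa ha2
    obtain ⟨b0, ⟨hb0M, hmem⟩, hb0un⟩ := steiner_unique hM' hdx
    refine ⟨b0.image (upF a), ⟨mem_liftM_iff.mpr (Or.inr ⟨b0, hb0M, rfl⟩), ?_⟩, ?_⟩
    · exact Finset.mem_image.mpr ⟨downF a x, hmem, upF_downF a x ha1 hx0 hxa⟩
    · rintro c ⟨hc, hxc⟩
      rcases mem_liftM_iff.mp hc with rfl | ⟨c0, hc0, rfl⟩
      · exfalso
        simp only [Finset.mem_insert, Finset.mem_singleton] at hxc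
        rcases hxc with rfl | rfl
        · exact hx0 rfl
        · exact hxa rfl
      · obtain ⟨y, hyc0, hyx⟩ := Finset.mem_image.mp hxc
        have hy : y = downF a x := by rw [← hyx, downF_upF]
        rw [hb0un c0 ⟨hc0, hy ▸ hyc0⟩]

lemma lift_steiner (ha1 : 1 ≤ a) (ha2 : a ≤ 2 * u + 1) (hM' : IsSteiner (2 * u) 1 2 M') :
    IsSteiner (2 * u + 2) 1 2 (liftM a M') :=
  steiner_of (lift_blocks ha1 ha2 hM'.1) (lift_unique ha1 ha2 hM')

end Stmt19Aux

namespace Stmt19Aux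

variable {u a : ℕ} {M' : Finset (Finset ℕ)}

lemma pair_cases {x y z w : ℕ} (h : ({x, y} : Finset ℕ) = {z, w}) :
    (x = z ∧ y = w) ∨ (x = w ∧ y = z) := by
  have hx : x = z ∨ x = w := by
    have : x ∈ ({z, w} : Finset ℕ) := h ▸ (by simp : x ∈ ({x, y} : Finset ℕ)); simpa using this
  have hy : y = z ∨ y = w := by
    have : y ∈ ({z, w} : Finset ℕ) := h ▸ (by simp : y ∈ ({x, y} : Finset ℕ)); simpa using this
  have hz : z = x ∨ z = y := by
    have : z ∈ ({x, y} : Finset ℕ) := h ▸ (by simp : z ∈ ({z, w} : Finset ℕ)); simpa using this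
  have hw : w = x ∨ w = y := by
    have : w ∈ ({x, y} : Finset ℕ) := h ▸ (by simp : w ∈ ({z, w} : Finset ℕ)); simpa using this
  omega

lemma ne_of_pair_card {x y : ℕ} (h : ({x, y} : Finset ℕ).card = 2) : x ≠ y := by
  intro he; subst he; simp at h

lemma pair_subset_range {x y n : ℕ} (hx : x < n) (hy : y < n) :
    ({x, y} : Finset ℕ) ⊆ Finset.range n := by
  intro z hz
  simp only [Finset.mem_insert, Finset.mem_singleton] at hz
  rcases hz with rfl | rfl <;> exact Finset.mem_range.mpr (by omega)

lemma mem_lift_zero (ha1 : 1 ≤ a) (p : ℕ) :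
    ({0, p} : Finset ℕ) ∈ qFin (2 * u + 2) (liftM a M') ↔ a ≤ p ∧ p < 2 * u + 2 := by
  rw [mem_qFin_iff]
  constructor
  · rintro ⟨hsub, hcard, hcase⟩
    have hp0 : p ≠ 0 := (ne_of_pair_card hcard).symm
    have hplt : p < 2 * u + 2 := by
      have := hsub (by simp : p ∈ ({0, p} : Finset ℕ)); simpa using this
    refine ⟨?_, hplt⟩
    rcases hcase with hmem | ⟨x, p', q, hP, hqp, hxq⟩
    · rcases mem_liftM_iff.mp hmem with heq | ⟨b0, hb0, heq⟩
      · have := pair_cases heq; omega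
      · exfalso
        have h0 : (0 : ℕ) ∈ b0.image (upF a) := by
          rw [← heq]; simp
        exact (up_block_avoid ha1 (Finset.mem_image.mpr ⟨b0, hb0, rfl⟩)).1 h0
    · have pc1 := pair_cases hP
      rcases mem_liftM_iff.mp hxq with heq | ⟨b0, hb0, heq⟩
      · have pc2 := pair_cases heq; omega
      · have hxb : x ∈ b0.image (upF a) := by
          rw [← heq]; simp
        have hx0 : x ≠ 0 := by
          intro h; subst h
          exact (up_block_avoid ha1 (Finset.mem_image.mpr ⟨b0, hb0, rfl⟩)).1 hxb
        omega
  · rintro ⟨hap, hplt⟩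
    have hp0 : p ≠ 0 := by omega
    refine ⟨pair_subset_range (by omega) hplt, Finset.card_pair (Ne.symm hp0), ?_⟩
    rcases eq_or_lt_of_le hap with rfl | hlt
    · exact Or.inl (mem_liftM_iff.mpr (Or.inl rfl))
    · exact Or.inr ⟨0, p, a, rfl, hlt, mem_liftM_iff.mpr (Or.inl rfl)⟩

lemma mem_lift_a (ha1 : 1 ≤ a) (ha2 : a ≤ 2 * u + 1) (p : ℕ) (hp0 : p ≠ 0) (hpa : p ≠ a)
    (hp : p < 2 * u + 2) : ({a, p} : Finset ℕ) ∈ qFin (2 * u + 2) (liftM a M') := by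
  rw [mem_qFin_iff]
  refine ⟨pair_subset_range (by omega) hp, Finset.card_pair (Ne.symm hpa),
    Or.inr ⟨a, p, 0, rfl, by omega, ?_⟩⟩
  have h : ({a, 0} : Finset ℕ) = {0, a} := Finset.pair_comm a 0
  rw [h]
  exact mem_liftM_iff.mpr (Or.inl rfl)

end Stmt19Aux

namespace Stmt19Aux

variable {u a : ℕ} {M' : Finset (Finset ℕ)}

lemma image_pair (f : ℕ → ℕ) (x y : ℕ) : ({x, y} : Finset ℕ).image f = {f x, f y} := by
  simp

lemma mem_lift_avoid (ha1 : 1 ≤ a) (ha2 : a ≤ 2 * u + 1) (hM' : IsSteiner (2 * u) 1 2 M')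
    {P : Finset ℕ} (h0 : 0 ∉ P) (hA : a ∉ P) :
    P ∈ qFin (2 * u + 2) (liftM a M') ↔ ∃ P₀ ∈ qFin (2 * u) M', P = P₀.image (upF a) := by
  constructor
  · rintro h
    rw [mem_qFin_iff] at h
    obtain ⟨hsub, hcard, hcase⟩ := h
    rcases hcase with hmem | ⟨x, p, q, hP, hqp, hxq⟩
    · rcases mem_liftM_iff.mp hmem with heq | ⟨b0, hb0, heq⟩
      · exfalso; apply h0; rw [heq]; simp
      · refine ⟨b0, ?_, heq⟩
        rw [mem_qFin_iff]
        exact ⟨(hM'.1 b0 hb0).1, (hM'.1 b0 hb0).2, Or.inl hb0⟩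
    · -- P = {x, p}, q < p, {x, q} ∈ lift
      have hxP : x ∈ P := by rw [hP]; simp
      have hpP : p ∈ P := by rw [hP]; simp
      have hx0 : x ≠ 0 := fun h => h0 (h ▸ hxP)
      have hxa : x ≠ a := fun h => hA (h ▸ hxP)
      have hp0 : p ≠ 0 := fun h => h0 (h ▸ hpP)
      have hpa : p ≠ a := fun h => hA (h ▸ hpP)
      have hxlt : x < 2 * u + 2 := by simpa using hsub hxP
      have hplt : p < 2 * u + 2 := by simpa using hsub hpP
      have hxp : x ≠ p := ne_of_pair_card (hP ▸ hcard)
      rcases mem_liftM_iff.mp hxq with heq | ⟨b0, hb0, heq⟩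
      · exfalso
        rcases pair_cases heq with ⟨h1, _⟩ | ⟨h1, _⟩
        · exact hx0 h1
        · exact hxa h1
      · -- {x, q} = image up b0
        obtain ⟨hb0r, hb0c⟩ := hM'.1 b0 hb0
        have hxm : x ∈ b0.image (upF a) := by rw [← heq]; simp
        have hqm : q ∈ b0.image (upF a) := by rw [← heq]; simp
        obtain ⟨x0, hx0b, hx0e⟩ := Finset.mem_image.mp hxm
        obtain ⟨q0, hq0b, hq0e⟩ := Finset.mem_image.mp hqm
        have hdx : downF a x = x0 := by rw [← hx0e, downF_upF]
        have hdq : downF a q = q0 := by rw [← hq0e, downF_upF]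
        have hq0 : q ≠ 0 := by rw [← hq0e]; exact (Nat.ne_of_lt (upF_pos a q0)).symm
        have hqa : q ≠ a := by rw [← hq0e]; exact upF_ne a q0 ha1
        have hxq' : x ≠ q := by
          have : ({x, q} : Finset ℕ).card = 2 := by
            rw [heq, Finset.card_image_of_injective _ (upF_strictMono a).injective, hb0c]
          exact ne_of_pair_card this
        have hdxp : downF a x ≠ downF a p := by
          intro h
          apply hxp
          rw [← upF_downF a x ha1 hx0 hxa, h, upF_downF a p ha1 hp0 hpa]
        have hdxq : downF a x ≠ downF a q := by
          intro h
          apply hxq'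
          rw [← upF_downF a x ha1 hx0 hxa, h, upF_downF a q ha1 hq0 hqa]
        have hb0eq : b0 = {downF a x, downF a q} := by
          refine (Finset.eq_of_subset_of_card_le ?_ ?_).symm
          · intro z hz
            simp only [Finset.mem_insert, Finset.mem_singleton] at hz
            rcases hz with rfl | rfl
            · rw [hdx]; exact hx0b
            · rw [hdq]; exact hq0b
          · rw [hb0c, Finset.card_pair hdxq]
        refine ⟨{downF a x, downF a p}, ?_, ?_⟩
        · rw [mem_qFin_iff]
          refine ⟨pair_subset_range (downF_lt a x (2*u) ha1 hxlt hx0 hxa ha2)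
              (downF_lt a p (2*u) ha1 hplt hp0 hpa ha2), Finset.card_pair hdxp,
            Or.inr ⟨downF a x, downF a p, downF a q, rfl, ?_, ?_⟩⟩
          · exact downF_lt_downF a q p ha1 hq0 hqa hp0 hpa hqp
          · rw [← hb0eq]; exact hb0
        · rw [hP, image_pair, upF_downF a x ha1 hx0 hxa, upF_downF a p ha1 hp0 hpa]
  · rintro ⟨P₀, hP₀, rfl⟩
    rw [mem_qFin_iff] at hP₀ ⊢
    obtain ⟨hsub0, hcard0, hcase0⟩ := hP₀
    refine ⟨?_, ?_, ?_⟩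
    · intro z hz
      obtain ⟨y, hy, rfl⟩ := Finset.mem_image.mp hz
      exact Finset.mem_range.mpr (upF_lt a y (2*u) (Finset.mem_range.mp (hsub0 hy)))
    · rw [Finset.card_image_of_injective _ (upF_strictMono a).injective]; exact hcard0
    · rcases hcase0 with hmem | ⟨x, p, q, hP0, hqp, hxq⟩
      · exact Or.inl (mem_liftM_iff.mpr (Or.inr ⟨P₀, hmem, rfl⟩))
      · refine Or.inr ⟨upF a x, upF a p, upF a q, ?_, (upF_strictMono a) hqp, ?_⟩
        · rw [hP0, image_pair]
        · rw [← image_pair]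
          exact mem_liftM_iff.mpr (Or.inr ⟨{x, q}, hxq, rfl⟩)

end Stmt19Aux

namespace Stmt19Aux

variable {u a : ℕ} {M' : Finset (Finset ℕ)}

lemma lift_q (ha1 : 1 ≤ a) (ha2 : a ≤ 2 * u + 1) (hM' : IsSteiner (2 * u) 1 2 M') :
    (qFin (2 * u + 2) (liftM a M')).card = (qFin (2 * u) M').card + (4 * u + 2 - a) := by
  classical
  set A1 := (Finset.Icc a (2 * u + 1)).image (fun p => ({0, p} : Finset ℕ)) with hA1
  set A2 := (((Finset.range (2 * u + 2)).erase 0).erase a).image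
      (fun p => ({a, p} : Finset ℕ)) with hA2
  set A3 := (qFin (2 * u) M').image (fun P => P.image (upF a)) with hA3
  have havoid3 : ∀ P ∈ A3, 0 ∉ P ∧ a ∉ P := by
    intro P hP
    obtain ⟨P₀, _, rfl⟩ := Finset.mem_image.mp hP
    constructor
    · intro h
      obtain ⟨y, _, hy⟩ := Finset.mem_image.mp h
      exact absurd hy.symm (Nat.ne_of_lt (upF_pos a y))
    · intro h
      obtain ⟨y, _, hy⟩ := Finset.mem_image.mp h
      exact upF_ne a y ha1 hy
  have hzero1 : ∀ P ∈ A1, 0 ∈ P := by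
    intro P hP; obtain ⟨p, _, rfl⟩ := Finset.mem_image.mp hP; simp
  have ha2' : ∀ P ∈ A2, a ∈ P ∧ 0 ∉ P := by
    intro P hP
    obtain ⟨p, hp, rfl⟩ := Finset.mem_image.mp hP
    have hp' := Finset.mem_erase.mp hp
    have hp'' := Finset.mem_erase.mp hp'.2
    refine ⟨by simp, ?_⟩
    simp only [Finset.mem_insert, Finset.mem_singleton]
    push_neg
    exact ⟨Ne.symm (by omega), Ne.symm hp''.1⟩
  have hsplit : qFin (2 * u + 2) (liftM a M') = (A1 ∪ A2) ∪ A3 := by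
    ext P
    constructor
    · intro hP
      obtain ⟨hsub, hcard, -⟩ := (mem_qFin_iff P).mp hP
      by_cases h0 : 0 ∈ P
      · obtain ⟨p, hp⟩ := Finset.card_eq_one.mp
          (by rw [Finset.card_erase_of_mem h0, hcard] : (P.erase 0).card = 1)
        have hPp : P = {0, p} := by rw [← Finset.insert_erase h0, hp]
        rw [hPp] at hP
        obtain ⟨h1, h2⟩ := (mem_lift_zero ha1 p).mp hP
        refine Finset.mem_union_left _ (Finset.mem_union_left _ ?_)
        rw [hA1, Finset.mem_image]
        exact ⟨p, Finset.mem_Icc.mpr ⟨h1, by omega⟩, hPp.symm⟩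
      · by_cases hA : a ∈ P
        · obtain ⟨p, hp⟩ := Finset.card_eq_one.mp
            (by rw [Finset.card_erase_of_mem hA, hcard] : (P.erase a).card = 1)
          have hPp : P = {a, p} := by rw [← Finset.insert_erase hA, hp]
          have hpP : p ∈ P := by rw [hPp]; simp
          have hpa : p ≠ a := by
            have : p ∈ P.erase a := hp ▸ Finset.mem_singleton_self p
            exact Finset.ne_of_mem_erase this
          have hp0 : p ≠ 0 := fun h => h0 (h ▸ hpP)
          have hplt : p < 2 * u + 2 := by simpa using hsub hpP
          refine Finset.mem_union_left _ (Finset.mem_union_right _ ?_)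
          rw [hA2, Finset.mem_image]
          exact ⟨p, by simp [hpa, hp0, hplt], hPp.symm⟩
        · obtain ⟨P₀, hP₀, hPe⟩ := (mem_lift_avoid ha1 ha2 hM' h0 hA).mp hP
          exact Finset.mem_union_right _ (Finset.mem_image.mpr ⟨P₀, hP₀, hPe.symm⟩)
    · intro hP
      rcases Finset.mem_union.mp hP with hP | hP
      · rcases Finset.mem_union.mp hP with hP | hP
        · obtain ⟨p, hp, rfl⟩ := Finset.mem_image.mp hP
          have := Finset.mem_Icc.mp hp
          exact (mem_lift_zero ha1 p).mpr ⟨this.1, by omega⟩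
        · obtain ⟨p, hp, rfl⟩ := Finset.mem_image.mp hP
          have hp' := Finset.mem_erase.mp hp
          have hp'' := Finset.mem_erase.mp hp'.2
          exact mem_lift_a ha1 ha2 p hp''.1 hp'.1 (Finset.mem_range.mp hp''.2)
      · obtain ⟨P₀, hP₀, rfl⟩ := Finset.mem_image.mp hP
        have h := havoid3 _ (Finset.mem_image.mpr ⟨P₀, hP₀, rfl⟩)
        exact (mem_lift_avoid ha1 ha2 hM' h.1 h.2).mpr ⟨P₀, hP₀, rfl⟩
  have hd1 : Disjoint A1 A2 := by
    rw [Finset.disjoint_left]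
    intro P h1 h2
    exact (ha2' P h2).2 (hzero1 P h1)
  have hd2 : Disjoint (A1 ∪ A2) A3 := by
    rw [Finset.disjoint_left]
    intro P h12 h3
    rcases Finset.mem_union.mp h12 with h | h
    · exact (havoid3 P h3).1 (hzero1 P h)
    · exact (havoid3 P h3).2 (ha2' P h).1
  have hc1 : A1.card = 2 * u + 2 - a := by
    rw [hA1, Finset.card_image_of_injOn, Nat.card_Icc]
    intro p hp p' hp' h
    have h1 := Finset.mem_Icc.mp hp
    have h2 := Finset.mem_Icc.mp hp'
    have := pair_cases h
    omega
  have hc2 : A2.card = 2 * u := by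
    rw [hA2, Finset.card_image_of_injOn]
    · rw [Finset.card_erase_of_mem, Finset.card_erase_of_mem] <;>
        simp [Finset.mem_erase] <;> omega
    · intro p hp p' hp' h
      have h1 := Finset.mem_erase.mp hp
      have h2 := Finset.mem_erase.mp hp'
      have := pair_cases h
      omega
  have hc3 : A3.card = (qFin (2 * u) M').card := by
    rw [hA3, Finset.card_image_of_injective _
      (Finset.image_injective (upF_strictMono a).injective)]
  rw [hsplit, Finset.card_union_of_disjoint hd2, Finset.card_union_of_disjoint hd1,
    hc1, hc2, hc3]
  omega

end Stmt19Aux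

namespace Stmt19Aux

noncomputable def aOf (M : Finset (Finset ℕ)) : ℕ :=
  (M.filter (fun b => 0 ∈ b)).sup (fun b => b.sup id)

noncomputable def shrink (M : Finset (Finset ℕ)) : Finset (Finset ℕ) :=
  (M.erase {0, aOf M}).image (fun b => b.image (downF (aOf M)))

variable {u : ℕ} {M : Finset (Finset ℕ)}

lemma exists_c (hM : IsSteiner (2 * u + 2) 1 2 M) :
    ∃ c, 1 ≤ c ∧ c ≤ 2 * u + 1 ∧ aOf M = c ∧ ({0, c} : Finset ℕ) ∈ M ∧
      (∀ b ∈ M, 0 ∈ b → b = {0, c}) ∧ (∀ b ∈ M, c ∈ b → b = {0, c}) := by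
  obtain ⟨b0, ⟨hb0M, h0b0⟩, hun⟩ := steiner_unique hM (show 0 < 2 * u + 2 by omega)
  obtain ⟨hb0r, hb0c⟩ := hM.1 b0 hb0M
  obtain ⟨c, hc⟩ := Finset.card_eq_one.mp
    (by rw [Finset.card_erase_of_mem h0b0, hb0c] : (b0.erase 0).card = 1)
  have hb0 : b0 = {0, c} := by rw [← Finset.insert_erase h0b0, hc]
  have hc0 : c ≠ 0 := Finset.ne_of_mem_erase (hc ▸ Finset.mem_singleton_self c)
  have hcb0 : c ∈ b0 := Finset.mem_of_mem_erase (hc ▸ Finset.mem_singleton_self c)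
  have hclt : c < 2 * u + 2 := Finset.mem_range.mp (hb0r hcb0)
  have hfil : M.filter (fun b => 0 ∈ b) = {b0} := by
    ext b
    simp only [Finset.mem_filter, Finset.mem_singleton]
    constructor
    · rintro ⟨h1, h2⟩; exact hun b ⟨h1, h2⟩
    · rintro rfl; exact ⟨hb0M, h0b0⟩
  have haOf : aOf M = c := by
    rw [aOf, hfil, Finset.sup_singleton, hb0]
    simp
  have hunq : ∀ b ∈ M, 0 ∈ b → b = {0, c} := by
    intro b hb h0b; rw [← hb0]; exact hun b ⟨hb, h0b⟩
  refine ⟨c, by omega, by omega, haOf, hb0 ▸ hb0M, hunq, ?_⟩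
  intro b hb hcb
  obtain ⟨bc, hbc, hunc⟩ := steiner_unique hM hclt
  rw [hunc b ⟨hb, hcb⟩, ← hunc b0 ⟨hb0M, hcb0⟩, hb0]

lemma shrink_mem_iff {c : ℕ} (hM : IsSteiner (2 * u + 2) 1 2 M) (h : aOf M = c)
    {b : Finset ℕ} :
    b ∈ shrink M ↔ ∃ b0 ∈ M, b0 ≠ {0, c} ∧ b = b0.image (downF c) := by
  rw [shrink, h]
  simp only [Finset.mem_image, Finset.mem_erase]
  constructor
  · rintro ⟨b0, ⟨hne, hmem⟩, rfl⟩; exact ⟨b0, hmem, hne, rfl⟩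
  · rintro ⟨b0, hmem, hne, rfl⟩; exact ⟨b0, ⟨hne, hmem⟩, rfl⟩

lemma shrink_steiner (hM : IsSteiner (2 * u + 2) 1 2 M) :
    IsSteiner (2 * u) 1 2 (shrink M) := by
  obtain ⟨c, hc1, hc2, haOf, hb0M, hun0, hunc⟩ := exists_c hM
  have hSblock : ∀ b0 ∈ M, b0 ≠ {0, c} → ∀ x ∈ b0, x ≠ 0 ∧ x ≠ c ∧ x < 2 * u + 2 := by
    intro b0 hb0 hne x hx
    refine ⟨?_, ?_, Finset.mem_range.mp ((hM.1 b0 hb0).1 hx)⟩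
    · intro h; exact hne (hun0 b0 hb0 (h ▸ hx))
    · intro h; exact hne (hunc b0 hb0 (h ▸ hx))
  apply steiner_of
  · intro b hb
    obtain ⟨b0, hb0, hne, rfl⟩ := (shrink_mem_iff hM haOf).mp hb
    constructor
    · intro z hz
      obtain ⟨y, hy, rfl⟩ := Finset.mem_image.mp hz
      obtain ⟨hy0, hyc, hylt⟩ := hSblock b0 hb0 hne y hy
      exact Finset.mem_range.mpr (downF_lt c y (2 * u) hc1 hylt hy0 hyc hc2)
    · rw [Finset.card_image_of_injOn, (hM.1 b0 hb0).2]
      intro y hy y' hy' he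
      obtain ⟨hy0, hyc, _⟩ := hSblock b0 hb0 hne y hy
      obtain ⟨hy0', hyc', _⟩ := hSblock b0 hb0 hne y' hy'
      rw [← upF_downF c y hc1 hy0 hyc, he, upF_downF c y' hc1 hy0' hyc']
  · intro y hy
    have hup : upF c y < 2 * u + 2 := upF_lt c y (2 * u) hy
    obtain ⟨b0, ⟨hb0M, hmem⟩, hb0un⟩ := steiner_unique hM hup
    have hb0ne : b0 ≠ {0, c} := by
      intro h
      subst h
      simp only [Finset.mem_insert, Finset.mem_singleton] at hmem
      rcases hmem with h | h
      · exact absurd h.symm (Nat.ne_of_lt (upF_pos c y))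
      · exact upF_ne c y hc1 h
    refine ⟨b0.image (downF c), ⟨(shrink_mem_iff hM haOf).mpr ⟨b0, hb0M, hb0ne, rfl⟩, ?_⟩, ?_⟩
    · exact Finset.mem_image.mpr ⟨upF c y, hmem, by rw [downF_upF]⟩
    · rintro b ⟨hb, hyb⟩
      obtain ⟨b1, hb1, hne1, rfl⟩ := (shrink_mem_iff hM haOf).mp hb
      obtain ⟨z, hzb1, hzy⟩ := Finset.mem_image.mp hyb
      obtain ⟨hz0, hzc, _⟩ := hSblock b1 hb1 hne1 z hzb1
      have : upF c y = z := by rw [← hzy, upF_downF c z hc1 hz0 hzc]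
      rw [hb0un b1 ⟨hb1, this ▸ hzb1⟩]

lemma lift_shrink (hM : IsSteiner (2 * u + 2) 1 2 M) : liftM (aOf M) (shrink M) = M := by
  obtain ⟨c, hc1, hc2, haOf, hb0M, hun0, hunc⟩ := exists_c hM
  have hSblock : ∀ b0 ∈ M, b0 ≠ {0, c} → ∀ x ∈ b0, x ≠ 0 ∧ x ≠ c := by
    intro b0 hb0 hne x hx
    constructor
    · intro h; exact hne (hun0 b0 hb0 (h ▸ hx))
    · intro h; exact hne (hunc b0 hb0 (h ▸ hx))
  rw [haOf]
  ext b
  rw [mem_liftM_iff]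
  constructor
  · rintro (rfl | ⟨b0, hb0, rfl⟩)
    · exact hb0M
    · obtain ⟨b1, hb1, hne1, rfl⟩ := (shrink_mem_iff hM haOf).mp hb0
      have heq : (b1.image (downF c)).image (upF c) = b1 := by
        rw [Finset.image_image]
        have h : ∀ x ∈ b1, (upF c ∘ downF c) x = id x := by
          intro x hx
          obtain ⟨h0, hc'⟩ := hSblock b1 hb1 hne1 x hx
          simp only [Function.comp_apply, id_eq]
          exact upF_downF c x hc1 h0 hc'
        rw [Finset.image_congr h, Finset.image_id]
      rw [heq]
      exact hb1
  · intro hb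
    by_cases hbe : b = {0, c}
    · exact Or.inl hbe
    · refine Or.inr ⟨b.image (downF c), (shrink_mem_iff hM haOf).mpr ⟨b, hb, hbe, rfl⟩, ?_⟩
      rw [Finset.image_image]
      have : ∀ x ∈ b, (upF c ∘ downF c) x = id x := by
        intro x hx
        obtain ⟨h0, hc'⟩ := hSblock b hb hbe x hx
        simp only [Function.comp_apply, id_eq]
        exact upF_downF c x hc1 h0 hc'
      rw [Finset.image_congr this, Finset.image_id]

end Stmt19Aux

namespace Stmt19Aux

variable {u a : ℕ} {M M' : Finset (Finset ℕ)}

lemma aOf_lift (ha1 : 1 ≤ a) : aOf (liftM a M') = a := by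
  have hfil : (liftM a M').filter (fun b => 0 ∈ b) = {({0, a} : Finset ℕ)} := by
    ext b
    simp only [Finset.mem_filter, Finset.mem_singleton]
    constructor
    · rintro ⟨hb, h0⟩
      rcases mem_liftM_iff.mp hb with rfl | ⟨b0, hb0, rfl⟩
      · rfl
      · exact absurd h0 (up_block_avoid ha1 (Finset.mem_image.mpr ⟨b0, hb0, rfl⟩)).1
    · rintro rfl
      exact ⟨mem_liftM_iff.mpr (Or.inl rfl), by simp⟩
  rw [aOf, hfil, Finset.sup_singleton]
  simp

lemma shrink_lift (ha1 : 1 ≤ a) : shrink (liftM a M') = M' := by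
  rw [shrink, aOf_lift ha1]
  have herase : (liftM a M').erase {0, a} = M'.image (fun b => b.image (upF a)) := by
    rw [liftM, Finset.erase_insert]
    intro h
    exact (up_block_avoid ha1 h).1 (by simp)
  rw [herase, Finset.image_image]
  have h : ∀ b ∈ M', ((fun b => Finset.image (downF a) b) ∘ fun b => Finset.image (upF a) b) b
      = id b := by
    intro b _
    simp only [Function.comp_apply, id_eq, Finset.image_image]
    have h2 : ∀ x ∈ b, (downF a ∘ upF a) x = id x := by
      intro x _
      simp only [Function.comp_apply, id_eq, downF_upF]
    rw [Finset.image_congr h2, Finset.image_id]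
  rw [Finset.image_congr h, Finset.image_id]

lemma q_recursion (hM : IsSteiner (2 * u + 2) 1 2 M) :
    (qstarW (2 * u + 2) 2 M).ncard
      = (4 * u + 2 - aOf M) + (qstarW (2 * u) 2 (shrink M)).ncard := by
  obtain ⟨c, hc1, hc2, haOf, -, -, -⟩ := exists_c hM
  have hM' := shrink_steiner hM
  rw [ncard_qstar hM.1, ncard_qstar hM'.1]
  conv_lhs => rw [← lift_shrink hM, haOf]
  rw [lift_q (M' := shrink M) (haOf ▸ hc1) (haOf ▸ hc2) hM', haOf]
  omega

end Stmt19Aux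


open Finset Stmt19Aux in
open Polynomial in
open scoped Classical in
/-- The generating polynomial identity for the game distribution of `S(1, 2, 2v)`:
`Σ_n f_D(n) xⁿ = x^{v²} Π_{i=1}^{v} (x^{2i-1} - 1)/(x - 1)`, where `f_D(n)` is the
number of perfect matchings `M` of `{0, ..., 2v-1}` with `|Q*(M)| = n`; the left-hand
side is written as the sum of `x^{|Q*(M)|}` over all such matchings `M`, and each
factor `(x^{2i-1} - 1)/(x - 1)` as the geometric sum `Σ_{j<2i-1} x^j`. -/
theorem stmt_19 (v : ℕ) :
    ∑ M ∈ (((Finset.range (2 * v)).powerset.powerset).filter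
        fun 𝔅 => IsSteiner (2 * v) 1 2 𝔅),
      (X : Polynomial ℤ) ^ (qstarW (2 * v) 2 M).ncard
    = X ^ (v ^ 2) * ∏ i ∈ Finset.range v, ∑ j ∈ Finset.range (2 * i + 1), X ^ j := by
  induction v with
  | zero =>
    have hfil : (((Finset.range (2 * 0)).powerset.powerset).filter
        fun 𝔅 => IsSteiner (2 * 0) 1 2 𝔅) = {(∅ : Finset (Finset ℕ))} := by
      ext 𝔅
      simp only [Finset.mem_filter, Finset.mem_singleton]
      constructor
      · rintro ⟨hpow, hS⟩
        rw [Finset.eq_empty_iff_forall_notMem]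
        intro b hb
        obtain ⟨hsub, hcard⟩ := hS.1 b hb
        have hb0 : b = ∅ := Finset.subset_empty.mp (by simpa using hsub)
        rw [hb0] at hcard
        simp at hcard
      · rintro rfl
        refine ⟨by simp, ⟨by simp, ?_⟩⟩
        intro T hT hT1
        exfalso
        have : T = ∅ := Finset.subset_empty.mp (by simpa using hT)
        rw [this] at hT1
        simp at hT1
    rw [hfil, Finset.sum_singleton]
    have hq : qstarW (2 * 0) 2 (∅ : Finset (Finset ℕ)) = ∅ := by
      ext P
      simp [qstarW]
    rw [hq]
    simp
  | succ u ih =>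
    have h2 : 2 * (u + 1) = 2 * u + 2 := by ring
    rw [h2]
    have hmem_t : ∀ N : Finset (Finset ℕ),
        N ∈ (((Finset.range (2 * u + 2)).powerset.powerset).filter
          fun 𝔅 => IsSteiner (2 * u + 2) 1 2 𝔅) ↔ IsSteiner (2 * u + 2) 1 2 N := by
      intro N
      simp only [Finset.mem_filter, Finset.mem_powerset]
      constructor
      · exact And.right
      · intro h
        exact ⟨fun b hb => Finset.mem_powerset.mpr (h.1 b hb).1, h⟩
    have hmem_s : ∀ N : Finset (Finset ℕ),
        N ∈ (((Finset.range (2 * u)).powerset.powerset).filter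
          fun 𝔅 => IsSteiner (2 * u) 1 2 𝔅) ↔ IsSteiner (2 * u) 1 2 N := by
      intro N
      simp only [Finset.mem_filter, Finset.mem_powerset]
      constructor
      · exact And.right
      · intro h
        exact ⟨fun b hb => Finset.mem_powerset.mpr (h.1 b hb).1, h⟩
    have step1 : ∑ M ∈ (((Finset.range (2 * u + 2)).powerset.powerset).filter
          fun 𝔅 => IsSteiner (2 * u + 2) 1 2 𝔅),
        (X : Polynomial ℤ) ^ (qstarW (2 * u + 2) 2 M).ncard
        = ∑ p ∈ (Finset.Icc 1 (2 * u + 1)) ×ˢ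
            (((Finset.range (2 * u)).powerset.powerset).filter
              fun 𝔅 => IsSteiner (2 * u) 1 2 𝔅),
          (X : Polynomial ℤ) ^ ((4 * u + 2 - p.1) + (qstarW (2 * u) 2 p.2).ncard) := by
      apply Finset.sum_nbij' (i := fun M => (aOf M, shrink M)) (j := fun p => liftM p.1 p.2)
      · intro M hM
        have hS := (hmem_t M).mp hM
        obtain ⟨c, hc1, hc2, haOf, -, -, -⟩ := exists_c hS
        rw [Finset.mem_product]
        exact ⟨Finset.mem_Icc.mpr ⟨haOf ▸ hc1, haOf ▸ hc2⟩,
          (hmem_s _).mpr (shrink_steiner hS)⟩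
      · intro p hp
        rw [Finset.mem_product] at hp
        obtain ⟨ha, hM'⟩ := hp
        have hb := Finset.mem_Icc.mp ha
        exact (hmem_t _).mpr (lift_steiner hb.1 hb.2 ((hmem_s _).mp hM'))
      · intro M hM
        exact lift_shrink ((hmem_t M).mp hM)
      · intro p hp
        rw [Finset.mem_product] at hp
        obtain ⟨ha, hM'⟩ := hp
        have hb := Finset.mem_Icc.mp ha
        exact Prod.ext (aOf_lift hb.1) (shrink_lift hb.1)
      · intro M hM
        rw [q_recursion ((hmem_t M).mp hM)]
    rw [step1, Finset.sum_product]
    simp_rw [pow_add, ← Finset.mul_sum, ih, ← Finset.sum_mul]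
    have hsum : ∑ a ∈ Finset.Icc 1 (2 * u + 1), (X : Polynomial ℤ) ^ (4 * u + 2 - a)
        = ∑ j ∈ Finset.range (2 * u + 1), (X : Polynomial ℤ) ^ (2 * u + 1 + j) := by
      apply Finset.sum_nbij' (i := fun a => 2 * u + 1 - a) (j := fun j => 2 * u + 1 - j)
      · intro a ha
        have := Finset.mem_Icc.mp ha
        rw [Finset.mem_range]
        omega
      · intro j hj
        have := Finset.mem_range.mp hj
        rw [Finset.mem_Icc]
        omega
      · intro a ha
        have := Finset.mem_Icc.mp ha
        omega
      · intro j hj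
        have := Finset.mem_range.mp hj
        omega
      · intro a ha
        have := Finset.mem_Icc.mp ha
        congr 1
        omega
    rw [hsum]
    simp_rw [pow_add, ← Finset.mul_sum]
    rw [Finset.prod_range_succ, show (u + 1) ^ 2 = u ^ 2 + (2 * u + 1) by ring, pow_add]
    ring
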